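/- Let n, j be integers with 1 ≤ j ≤ n, let x be a real number with 0 ≤ x ≤ 1, and let t be an integer with 0 ≤ t ≤ n - j. If t is even, then Σ_{a=0}^{t} (-1)^a C(n, j+a) C(a+j-1, j-1) x^{a+j} ≥ Σ_{m=j}^{n} C(n,m) x^m (1-x)^{n-m}; if t is odd, then Σ_{a=0}^{t} (-1)^a C(n, j+a) C(a+j-1, j-1) x^{a+j} ≤ Σ_{m=j}^{n} C(n,m) x^m (1-x)^{n-m}. -/

import Mathlib

open Finset

/-- Truncations of the binomial expansion of `(1-x)^N` alternate around it. -/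
lemma alt_binom_bound (N : ℕ) : ∀ (t : ℕ) (x : ℝ), 0 ≤ x → x ≤ 1 →
    0 ≤ (-1 : ℝ) ^ t *
      ((∑ a ∈ range (t + 1), (-1 : ℝ) ^ a * (N.choose a : ℝ) * x ^ a) - (1 - x) ^ N) := by
  induction N with
  | zero =>
    intro t x hx0 hx1
    have hs : (∑ a ∈ range (t + 1), (-1 : ℝ) ^ a * ((Nat.choose 0 a : ℕ) : ℝ) * x ^ a) = 1 := by
      rw [Finset.sum_eq_single 0]
      · simp
      · intro b _ hb
        obtain ⟨b, rfl⟩ := Nat.exists_eq_succ_of_ne_zero hb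
        simp
      · simp
    simp [hs]
  | succ N ih =>
    intro t x hx0 hx1
    match t with
    | 0 =>
      have h1 : (1 - x) ^ (N + 1) ≤ 1 :=
        pow_le_one₀ (by linarith) (by linarith)
      simp only [pow_zero, one_mul, zero_add, Finset.sum_range_one, Nat.choose_zero_right]
      simp only [pow_zero, mul_one, Nat.cast_one, one_mul]
      linarith
    | t + 1 =>
      have key : (∑ a ∈ range (t + 2), (-1 : ℝ) ^ a * (((N + 1).choose a : ℕ) : ℝ) * x ^ a)
          = (∑ a ∈ range (t + 2), (-1 : ℝ) ^ a * ((N.choose a : ℕ) : ℝ) * x ^ a)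
            - x * (∑ a ∈ range (t + 1), (-1 : ℝ) ^ a * ((N.choose a : ℕ) : ℝ) * x ^ a) := by
        rw [Finset.sum_range_succ' (fun a => (-1 : ℝ) ^ a * (((N + 1).choose a : ℕ) : ℝ) * x ^ a) (t + 1),
            Finset.sum_range_succ' (fun a => (-1 : ℝ) ^ a * ((N.choose a : ℕ) : ℝ) * x ^ a) (t + 1),
            Finset.mul_sum]
        have hterm : ∀ k ∈ range (t + 1),
            (-1 : ℝ) ^ (k + 1) * (((N + 1).choose (k + 1) : ℕ) : ℝ) * x ^ (k + 1)
              = (-1 : ℝ) ^ (k + 1) * ((N.choose (k + 1) : ℕ) : ℝ) * x ^ (k + 1)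
                - x * ((-1 : ℝ) ^ k * ((N.choose k : ℕ) : ℝ) * x ^ k) := by
          intro k _
          rw [Nat.choose_succ_succ]
          push_cast
          ring
        rw [Finset.sum_congr rfl hterm, Finset.sum_sub_distrib]
        simp only [Nat.choose_zero_right, Nat.cast_one, pow_zero, mul_one, one_mul]
        ring
      rw [key]
      have h1 := ih (t + 1) x hx0 hx1
      have h2 := mul_nonneg hx0 (ih t x hx0 hx1)
      have hp : (1 - x) ^ (N + 1) = (1 - x) ^ N - x * (1 - x) ^ N := by ring
      rw [hp]
      have e : (-1 : ℝ) ^ (t + 1) *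
          ((∑ a ∈ range (t + 2), (-1 : ℝ) ^ a * ((N.choose a : ℕ) : ℝ) * x ^ a)
            - x * (∑ a ∈ range (t + 1), (-1 : ℝ) ^ a * ((N.choose a : ℕ) : ℝ) * x ^ a)
            - ((1 - x) ^ N - x * (1 - x) ^ N))
          = (-1 : ℝ) ^ (t + 1) *
              ((∑ a ∈ range (t + 1 + 1), (-1 : ℝ) ^ a * ((N.choose a : ℕ) : ℝ) * x ^ a)
                - (1 - x) ^ N)
            + x * ((-1 : ℝ) ^ t *
              ((∑ a ∈ range (t + 1), (-1 : ℝ) ^ a * ((N.choose a : ℕ) : ℝ) * x ^ a)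
                - (1 - x) ^ N)) := by
        ring
      rw [e]
      linarith

lemma nat_mul_choose (n m : ℕ) (hm : 1 ≤ m) :
    m * n.choose m = n * (n - 1).choose (m - 1) := by
  obtain ⟨m, rfl⟩ := Nat.exists_eq_add_of_le hm
  rcases Nat.eq_zero_or_pos n with hn | hn
  · subst hn; simp [Nat.choose_eq_zero_of_lt]
  obtain ⟨n, rfl⟩ := Nat.exists_eq_add_of_le hn
  simp only [Nat.add_sub_cancel_left, Nat.add_sub_cancel]
  rw [Nat.add_comm 1 m, Nat.add_comm 1 n]
  rw [mul_comm, ← Nat.add_one_mul_choose_eq]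

lemma nat_sub_mul_choose (n m : ℕ) :
    (n - m) * n.choose m = n * (n - 1).choose m := by
  rcases Nat.eq_zero_or_pos n with hn | hn
  · subst hn; rcases m with _ | m <;> simp
  obtain ⟨n, rfl⟩ := Nat.exists_eq_add_of_le hn
  rw [Nat.add_comm 1 n, Nat.add_sub_cancel]
  calc (n + 1 - m) * (n + 1).choose m = (n + 1).choose m * (n + 1 - m) := by ring
    _ = n.choose m * (n + 1) := (Nat.choose_mul_succ_eq n m).symm
    _ = (n + 1) * n.choose m := by ring

lemma hasDeriv_F (n j : ℕ) (hj : 1 ≤ j) (hjn : j ≤ n) (x : ℝ) :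
    HasDerivAt (fun y : ℝ => ∑ m ∈ Finset.Icc j n, (n.choose m : ℝ) * y ^ m * (1 - y) ^ (n - m))
      ((n : ℝ) * (((n - 1).choose (j - 1) : ℕ) : ℝ) * (x ^ (j - 1) * (1 - x) ^ (n - j))) x := by
  set d : ℕ → ℝ := fun m => ((n.choose m : ℕ) : ℝ) * ((m : ℝ) * x ^ (m - 1)) * (1 - x) ^ (n - m)
    + ((n.choose m : ℕ) : ℝ) * x ^ m * ((((n - m : ℕ) : ℕ) : ℝ) * (1 - x) ^ (n - m - 1) * (-1))
    with hd
  have hterm : ∀ m ∈ Finset.Icc j n,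
      HasDerivAt (fun y : ℝ => (n.choose m : ℝ) * y ^ m * (1 - y) ^ (n - m)) (d m) x := by
    intro m _
    have h1 : HasDerivAt (fun y : ℝ => (n.choose m : ℝ) * y ^ m)
        ((n.choose m : ℝ) * ((m : ℝ) * x ^ (m - 1))) x := (hasDerivAt_pow m x).const_mul _
    have h2 : HasDerivAt (fun y : ℝ => (1 - y) ^ (n - m))
        ((((n - m : ℕ) : ℕ) : ℝ) * (1 - x) ^ (n - m - 1) * (-1)) x :=
      ((hasDerivAt_id x).const_sub 1).pow _
    exact h1.mul h2
  have hsum := HasDerivAt.fun_sum hterm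
  set G : ℕ → ℝ := fun m =>
    (n : ℝ) * (((n - 1).choose (m - 1) : ℕ) : ℝ) * (x ^ (m - 1) * (1 - x) ^ (n - m)) with hG
  have htel : ∀ m ∈ Finset.Icc j n, d m = G m - G (m + 1) := by
    intro m hm
    have hm1 : 1 ≤ m := le_trans hj (Finset.mem_Icc.mp hm).1
    have e1 : ((m : ℝ)) * ((n.choose m : ℕ) : ℝ)
        = (n : ℝ) * (((n - 1).choose (m - 1) : ℕ) : ℝ) := by
      exact_mod_cast nat_mul_choose n m hm1
    have e2 : (((n - m : ℕ) : ℕ) : ℝ) * ((n.choose m : ℕ) : ℝ)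
        = (n : ℝ) * (((n - 1).choose m : ℕ) : ℝ) := by
      exact_mod_cast nat_sub_mul_choose n m
    have e3 : n - m - 1 = n - (m + 1) := by omega
    have e4 : (m + 1) - 1 = m := by omega
    rw [hd, hG]
    simp only [e3, e4]
    linear_combination (x ^ (m - 1) * (1 - x) ^ (n - m)) * e1
      - (x ^ m * (1 - x) ^ (n - (m + 1))) * e2
  rw [Finset.sum_congr rfl htel] at hsum
  have hIcc : Finset.Icc j n = Finset.Ico j (n + 1) := by rw [Finset.Ico_add_one_right_eq_Icc]
  rw [hIcc, Finset.sum_Ico_eq_sum_range] at hsum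
  have htel2 : (∑ i ∈ range (n + 1 - j), (G (j + i) - G (j + i + 1))) = G j - G (j + (n + 1 - j)) := by
    exact Finset.sum_range_sub' (fun i => G (j + i)) (n + 1 - j)
  rw [htel2] at hsum
  have hj2 : j + (n + 1 - j) = n + 1 := by omega
  have hzero : G (n + 1) = 0 := by
    rw [hG]
    simp only [Nat.add_sub_cancel]
    rw [Nat.choose_eq_zero_of_lt (by omega : n - 1 < n)]
    simp
  rw [hj2, hzero, sub_zero, hG] at hsum
  exact hsum

lemma nat_key (n j a : ℕ) (hj : 1 ≤ j) (hjn : j ≤ n) :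
    (a + j) * n.choose (j + a) * (a + j - 1).choose (j - 1)
      = n * (n - 1).choose (j - 1) * (n - j).choose a := by
  rcases le_or_gt (j + a) n with h | h
  · have h1 : (a + j) * n.choose (j + a) = n * (n - 1).choose (j + a - 1) := by
      rw [Nat.add_comm a j]
      exact nat_mul_choose n (j + a) (by omega)
    have h2 : (n - 1).choose (j + a - 1) * (j + a - 1).choose (j - 1)
        = (n - 1).choose (j - 1) * ((n - 1) - (j - 1)).choose ((j + a - 1) - (j - 1)) :=
      Nat.choose_mul (by omega)
    have e1 : a + j - 1 = j + a - 1 := by omega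
    have e2 : (n - 1) - (j - 1) = n - j := by omega
    have e3 : (j + a - 1) - (j - 1) = a := by omega
    rw [e1, h1, mul_assoc, h2, e2, e3, ← mul_assoc]
  · rw [Nat.choose_eq_zero_of_lt h, Nat.choose_eq_zero_of_lt (show n - j < a by omega)]
    simp

lemma hasDeriv_S (n j t : ℕ) (hj : 1 ≤ j) (hjn : j ≤ n) (x : ℝ) :
    HasDerivAt (fun y : ℝ => ∑ a ∈ Finset.range (t + 1),
        (-1 : ℝ) ^ a * (n.choose (j + a) : ℝ) * ((a + j - 1).choose (j - 1) : ℝ) * y ^ (a + j))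
      ((n : ℝ) * (((n - 1).choose (j - 1) : ℕ) : ℝ) * (x ^ (j - 1) *
        (∑ a ∈ range (t + 1), (-1 : ℝ) ^ a * ((n - j).choose a : ℝ) * x ^ a))) x := by
  have hterm : ∀ a ∈ Finset.range (t + 1),
      HasDerivAt (fun y : ℝ =>
          (-1 : ℝ) ^ a * (n.choose (j + a) : ℝ) * ((a + j - 1).choose (j - 1) : ℝ) * y ^ (a + j))
        ((-1 : ℝ) ^ a * (n.choose (j + a) : ℝ) * ((a + j - 1).choose (j - 1) : ℝ) *
          (((a + j : ℕ) : ℝ) * x ^ (a + j - 1))) x := by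
    intro a _
    exact (hasDerivAt_pow (a + j) x).const_mul _
  have hsum := HasDerivAt.fun_sum hterm
  have heq : (∑ a ∈ range (t + 1),
      (-1 : ℝ) ^ a * (n.choose (j + a) : ℝ) * ((a + j - 1).choose (j - 1) : ℝ) *
        (((a + j : ℕ) : ℝ) * x ^ (a + j - 1)))
      = (n : ℝ) * (((n - 1).choose (j - 1) : ℕ) : ℝ) * (x ^ (j - 1) *
        (∑ a ∈ range (t + 1), (-1 : ℝ) ^ a * ((n - j).choose a : ℝ) * x ^ a)) := by
    rw [Finset.mul_sum, Finset.mul_sum]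
    refine Finset.sum_congr rfl fun a _ => ?_
    have e1 : (((a + j : ℕ) : ℝ)) * ((n.choose (j + a) : ℕ) : ℝ) *
        (((a + j - 1).choose (j - 1) : ℕ) : ℝ)
        = (n : ℝ) * (((n - 1).choose (j - 1) : ℕ) : ℝ) * (((n - j).choose a : ℕ) : ℝ) := by
      exact_mod_cast nat_key n j a hj hjn
    have e2 : x ^ (a + j - 1) = x ^ (j - 1) * x ^ a := by
      rw [← pow_add]
      congr 1
      omega
    rw [e2]
    linear_combination ((-1 : ℝ) ^ a * x ^ (j - 1) * x ^ a) * e1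
  rw [heq] at hsum
  exact hsum

/-- Bonferroni-type bounds: for `1 ≤ j ≤ n`, `0 ≤ x ≤ 1` and `0 ≤ t ≤ n - j`, the
truncation after `t+1` terms of the alternating formula
`f_{j,n}(x) = Σ_a (-1)^a C(n,j+a) C(a+j-1,j-1) x^{a+j}` is an upper bound for the
unreliability `Σ_{m=j}^{n} C(n,m) x^m (1-x)^{n-m}` when `t` is even, and a lower bound
when `t` is odd. -/
theorem truncated_betti_formula_bounds (n j t : ℕ) (hj : 1 ≤ j) (hjn : j ≤ n)
    (ht : t ≤ n - j) (x : ℝ) (hx0 : 0 ≤ x) (hx1 : x ≤ 1) :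
    (Even t →
      ∑ m ∈ Finset.Icc j n, (n.choose m : ℝ) * x ^ m * (1 - x) ^ (n - m) ≤
        ∑ a ∈ Finset.range (t + 1),
          (-1 : ℝ) ^ a * (n.choose (j + a) : ℝ) * ((a + j - 1).choose (j - 1) : ℝ) *
            x ^ (a + j)) ∧
    (Odd t →
      ∑ a ∈ Finset.range (t + 1),
          (-1 : ℝ) ^ a * (n.choose (j + a) : ℝ) * ((a + j - 1).choose (j - 1) : ℝ) *
            x ^ (a + j) ≤
        ∑ m ∈ Finset.Icc j n, (n.choose m : ℝ) * x ^ m * (1 - x) ^ (n - m)) := by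
  set S : ℝ → ℝ := fun y => ∑ a ∈ Finset.range (t + 1),
      (-1 : ℝ) ^ a * (n.choose (j + a) : ℝ) * ((a + j - 1).choose (j - 1) : ℝ) * y ^ (a + j)
    with hS
  set F : ℝ → ℝ := fun y => ∑ m ∈ Finset.Icc j n, (n.choose m : ℝ) * y ^ m * (1 - y) ^ (n - m)
    with hF
  set φ : ℝ → ℝ := fun y => (-1 : ℝ) ^ t * (S y - F y) with hφ
  have hderiv : ∀ y : ℝ, HasDerivAt φ
      (((n : ℝ) * (((n - 1).choose (j - 1) : ℕ) : ℝ) * y ^ (j - 1)) *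
        ((-1 : ℝ) ^ t * ((∑ a ∈ range (t + 1), (-1 : ℝ) ^ a * ((n - j).choose a : ℝ) * y ^ a)
          - (1 - y) ^ (n - j)))) y := by
    intro y
    have h := ((hasDeriv_S n j t hj hjn y).fun_sub (hasDeriv_F n j hj hjn y)).const_mul
      ((-1 : ℝ) ^ t)
    exact h.congr_deriv (by ring)
  have hmono : MonotoneOn φ (Set.Icc (0 : ℝ) 1) := by
    apply monotoneOn_of_deriv_nonneg (convex_Icc 0 1)
    · exact fun y _ => (hderiv y).differentiableAt.continuousAt.continuousWithinAt
    · exact fun y _ => (hderiv y).differentiableAt.differentiableWithinAt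
    · intro y hy
      rw [interior_Icc] at hy
      rw [(hderiv y).deriv]
      apply mul_nonneg
      · apply mul_nonneg
        · positivity
        · exact pow_nonneg hy.1.le _
      · exact alt_binom_bound (n - j) t y hy.1.le hy.2.le
  have hφ0 : φ 0 = 0 := by
    have hS0 : S 0 = 0 := by
      rw [hS]
      apply Finset.sum_eq_zero
      intro a _
      rw [zero_pow (by omega : a + j ≠ 0)]
      ring
    have hF0 : F 0 = 0 := by
      rw [hF]
      apply Finset.sum_eq_zero
      intro m hm
      have : 1 ≤ m := le_trans hj (Finset.mem_Icc.mp hm).1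
      rw [zero_pow (by omega : m ≠ 0)]
      ring
    rw [hφ]
    simp [hS0, hF0]
  have hkey : 0 ≤ (-1 : ℝ) ^ t * (S x - F x) := by
    have := hmono (Set.mem_Icc.mpr ⟨le_refl 0, zero_le_one⟩) (Set.mem_Icc.mpr ⟨hx0, hx1⟩) hx0
    rw [hφ0] at this
    exact this
  constructor
  · intro hev
    rw [hev.neg_one_pow, one_mul] at hkey
    linarith
  · intro hodd
    rw [hodd.neg_one_pow] at hkey
    linarith
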